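/- arXiv:1501.06702 — 3 statements merged into one kernel-verified Lean document; each statement's English description precedes it below -/
import Mathlib

section
/- For 0 < ℓ < 1/2, define x₀(ℓ) = (1 + (1-ℓ)²) / (2(1-ℓ)cos(πℓ)) and X₀(ℓ) = x₀(ℓ) - sqrt(x₀(ℓ)² - 1). Then the supremum over ℓ ∈ (0, 1/2) of (1 - X₀(ℓ))/ℓ equals sqrt(1 + π²). -/
/-- Center on the real axis of the circle orthogonal to the unit circle through the
interior corners `(1-ℓ)e^{±iπℓ}` of a Carleson square. -/
noncomputable def x0 (ℓ : ℝ) : ℝ :=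
  (1 + (1 - ℓ) ^ 2) / (2 * (1 - ℓ) * Real.cos (Real.pi * ℓ))

/-- The closest point to the origin of that circle. -/
noncomputable def X0 (ℓ : ℝ) : ℝ := x0 ℓ - Real.sqrt ((x0 ℓ) ^ 2 - 1)

open Real Filter Set Topology

lemma aux_cos_pos {ℓ : ℝ} (h1 : 0 < ℓ) (h2 : ℓ < 1/2) : 0 < Real.cos (Real.pi * ℓ) := by
  apply Real.cos_pos_of_mem_Ioo
  constructor
  · nlinarith [Real.pi_pos]
  · nlinarith [Real.pi_pos]

lemma aux_one_le_x0 {ℓ : ℝ} (h1 : 0 < ℓ) (h2 : ℓ < 1/2) : 1 ≤ x0 ℓ := by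
  have hc := aux_cos_pos h1 h2
  have hc1 : Real.cos (Real.pi * ℓ) ≤ 1 := Real.cos_le_one _
  have hr : (0:ℝ) < 1 - ℓ := by linarith
  rw [x0, le_div_iff₀ (by positivity)]
  nlinarith [sq_nonneg ℓ, mul_nonneg (by linarith : (0:ℝ) ≤ 2*(1-ℓ)) (by linarith : 0 ≤ 1 - Real.cos (Real.pi * ℓ))]

set_option maxHeartbeats 1000000 in
lemma aux_upper {ℓ : ℝ} (h1 : 0 < ℓ) (h2 : ℓ < 1/2) :
    (1 - X0 ℓ) / ℓ ≤ Real.sqrt (1 + Real.pi ^ 2) := by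
  set M := Real.sqrt (1 + Real.pi ^ 2) with hMdef
  have hpip := Real.pi_pos
  have hM2 : M ^ 2 = 1 + Real.pi ^ 2 := Real.sq_sqrt (by positivity)
  have hMpos : 0 < M := Real.sqrt_pos.2 (by positivity)
  have hr : (0:ℝ) < 1 - ℓ := by linarith
  have hc : 0 < Real.cos (Real.pi * ℓ) := aux_cos_pos h1 h2
  set c := Real.cos (Real.pi * ℓ) with hcdef
  have hc1 : c ≤ 1 := Real.cos_le_one _
  have hcb : 1 - (Real.pi * ℓ)^2/2 ≤ c := Real.one_sub_sq_div_two_le_cos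
  have hd : 0 < 2 * (1 - ℓ) * c := by positivity
  have hx1 : 1 ≤ x0 ℓ := aux_one_le_x0 h1 h2
  have hxform : x0 ℓ = (1 + (1-ℓ)^2) / (2*(1-ℓ)*c) := rfl
  have hXform : X0 ℓ = x0 ℓ - Real.sqrt ((x0 ℓ)^2 - 1) := rfl
  set x := x0 ℓ with hxdef
  clear_value x
  clear_value c
  clear_value M
  have hkey : x - 1 ≤ ℓ^2 * M^2 / (2*(1-ℓ)*c) := by
    have hx := hxform
    have e1 : 1 - c ≤ (Real.pi * ℓ)^2/2 := by linarith
    have e2 : 1 + (1-ℓ)^2 - 2*(1-ℓ)*c ≤ ℓ^2 * M^2 := by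
      nlinarith [mul_le_mul_of_nonneg_left e1 hr.le,
        mul_nonneg (sq_nonneg Real.pi) (le_of_lt (mul_pos (mul_pos h1 h1) h1))]
    rw [hx, div_sub' (ne_of_gt hd), div_le_div_iff₀ hd hd]
    nlinarith [mul_le_mul_of_nonneg_right e2 hd.le, mul_pos hd hd]
  have hsq : Real.sqrt (x^2 - 1) ≤ (x - 1) + ℓ * M := by
    have hnn : 0 ≤ (x - 1) + ℓ * M := by nlinarith
    refine (Real.sqrt_le_sqrt ?_).trans (le_of_eq (Real.sqrt_sq hnn))
    rcases le_or_gt (1 - ℓ * M) 0 with hcase | hcase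
    · nlinarith [mul_nonneg (sub_nonneg.2 hx1) (by linarith : (0:ℝ) ≤ ℓ*M - 1)]
    · have hM' : M ≤ 1 + Real.pi^2/2 := by nlinarith
      have h2' : 1 - ℓ*M ≤ (1-ℓ)*c := by
        nlinarith [mul_le_mul_of_nonneg_left hcb hr.le,
          mul_pos h1 hMpos,
          mul_nonneg (sq_nonneg Real.pi) (le_of_lt (mul_pos (mul_pos h1 h1) h1)),
          mul_pos hpip hpip]
      have hprod := mul_le_mul hkey h2' hcase.le (by positivity)
      have heq : ℓ^2 * M^2 / (2*(1-ℓ)*c) * ((1-ℓ)*c) = ℓ^2*M^2/2 := by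
        field_simp
      rw [heq] at hprod
      nlinarith [hprod]
  rw [div_le_iff₀ h1, hXform]
  linarith

lemma aux_q_tendsto :
    Tendsto (fun ℓ : ℝ => (1 - Real.cos (Real.pi * ℓ)) / ℓ^2) (𝓝[>] 0)
      (𝓝 (Real.pi^2/2)) := by
  have hpi := Real.pi_pos
  have h0 : Tendsto (fun ℓ : ℝ => (1 - Real.cos (Real.pi*ℓ))/ℓ^2 - Real.pi^2/2)
      (𝓝[>] (0:ℝ)) (𝓝 0) := by
    apply squeeze_zero_norm' (a := fun ℓ : ℝ => Real.pi^4 * (5/96) * ℓ^2)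
    · filter_upwards [Ioo_mem_nhdsGT (show (0:ℝ) < 1/Real.pi
        by positivity)] with ℓ hℓ
      have hl0 : 0 < ℓ := hℓ.1
      have habs : |Real.pi * ℓ| ≤ 1 := by
        rw [abs_of_pos (by positivity)]
        rw [div_eq_mul_inv] at hℓ
        calc Real.pi * ℓ ≤ Real.pi * (1/Real.pi) := by
              apply mul_le_mul_of_nonneg_left hℓ.2.le hpi.le
          _ = 1 := by field_simp
      have hb := Real.cos_bound habs
      have hrw : (1 - Real.cos (Real.pi*ℓ))/ℓ^2 - Real.pi^2/2
          = -((Real.cos (Real.pi*ℓ) - (1 - (Real.pi*ℓ)^2/2))/ℓ^2) := by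
        field_simp
        ring
      rw [hrw, norm_neg, Real.norm_eq_abs, abs_div, abs_of_pos (by positivity : (0:ℝ) < ℓ^2),
        div_le_iff₀ (by positivity : (0:ℝ) < ℓ^2)]
      calc |Real.cos (Real.pi*ℓ) - (1 - (Real.pi*ℓ)^2/2)| ≤ |Real.pi*ℓ|^4 * (5/96) := hb
        _ = Real.pi^4 * (5/96) * ℓ^2 * ℓ^2 := by
            rw [abs_of_pos (by positivity)]; ring
    · have : Tendsto (fun ℓ : ℝ => Real.pi^4 * (5/96) * ℓ^2) (𝓝 (0:ℝ))
          (𝓝 (Real.pi^4 * (5/96) * 0^2)) := by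
        exact (continuous_const.mul (continuous_pow 2)).tendsto 0
      simpa using this.mono_left nhdsWithin_le_nhds
  have := h0.add (tendsto_const_nhds (x := Real.pi^2/2))
  simpa using this

lemma aux_x0_tendsto : Tendsto x0 (𝓝[>] 0) (𝓝 1) := by
  have hcont : Continuous fun ℓ : ℝ => (1 + (1 - ℓ) ^ 2 : ℝ) := by continuity
  have hcont2 : Continuous fun ℓ : ℝ => (2 * (1 - ℓ) * Real.cos (Real.pi * ℓ) : ℝ) := by
    continuity
  have : Tendsto x0 (𝓝 0) (𝓝 (x0 0)) := by
    apply Tendsto.div (hcont.tendsto 0) (hcont2.tendsto 0)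
    simp
  have hval : x0 0 = 1 := by simp [x0]
  rw [hval] at this
  exact this.mono_left nhdsWithin_le_nhds

lemma aux_h_tendsto :
    Tendsto (fun ℓ : ℝ => (x0 ℓ - 1) / ℓ^2) (𝓝[>] 0) (𝓝 ((1 + Real.pi^2)/2)) := by
  have hpi := Real.pi_pos
  have hrew : ∀ᶠ ℓ in 𝓝[>] (0:ℝ), (x0 ℓ - 1)/ℓ^2
      = (1 + 2*(1-ℓ)*((1 - Real.cos (Real.pi*ℓ))/ℓ^2))
        / (2*(1-ℓ)*Real.cos (Real.pi*ℓ)) := by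
    filter_upwards [Ioo_mem_nhdsGT (show (0:ℝ) < 1/2 by norm_num)]
      with ℓ hℓ
    have hc : 0 < Real.cos (Real.pi * ℓ) := aux_cos_pos hℓ.1 hℓ.2
    have hr : (0:ℝ) < 1 - ℓ := by linarith [hℓ.2]
    have hl0 : (0:ℝ) < ℓ := hℓ.1
    rw [x0]
    have hc2 : Real.cos (ℓ * Real.pi) ≠ 0 := by rw [mul_comm]; exact hc.ne'
    field_simp
    ring
  rw [tendsto_congr' hrew]
  have hden : Tendsto (fun ℓ : ℝ => 2*(1-ℓ)*Real.cos (Real.pi*ℓ)) (𝓝[>] (0:ℝ)) (𝓝 2) := by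
    have : Continuous fun ℓ : ℝ => 2*(1-ℓ)*Real.cos (Real.pi*ℓ) := by continuity
    have h2 := (this.tendsto 0).mono_left (nhdsWithin_le_nhds (s := Set.Ioi (0:ℝ)))
    simpa using h2
  have hnum : Tendsto (fun ℓ : ℝ => 1 + 2*(1-ℓ)*((1 - Real.cos (Real.pi*ℓ))/ℓ^2))
      (𝓝[>] (0:ℝ)) (𝓝 (1 + Real.pi^2)) := by
    have ha : Tendsto (fun ℓ : ℝ => 2*(1-ℓ)) (𝓝[>] (0:ℝ)) (𝓝 2) := by
      have : Continuous fun ℓ : ℝ => 2*(1-ℓ) := by continuity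
      have h2 := (this.tendsto 0).mono_left (nhdsWithin_le_nhds (s := Set.Ioi (0:ℝ)))
      simpa using h2
    have := tendsto_const_nhds (x := (1:ℝ)) (f := 𝓝[>] (0:ℝ)) |>.add (ha.mul aux_q_tendsto)
    convert this using 2
    ring
  have := hnum.div hden (by norm_num)
  convert this using 2
  rfl

lemma aux_f_tendsto :
    Tendsto (fun ℓ : ℝ => (1 - X0 ℓ) / ℓ) (𝓝[>] 0) (𝓝 (Real.sqrt (1 + Real.pi^2))) := by
  have hpi := Real.pi_pos
  have hrew : ∀ᶠ ℓ in 𝓝[>] (0:ℝ), (1 - X0 ℓ)/ℓ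
      = -(ℓ * ((x0 ℓ - 1)/ℓ^2)) + Real.sqrt (((x0 ℓ - 1)/ℓ^2) * (x0 ℓ + 1)) := by
    filter_upwards [Ioo_mem_nhdsGT (show (0:ℝ) < 1/2 by norm_num)]
      with ℓ hℓ
    have hl0 : (0:ℝ) < ℓ := hℓ.1
    have hx1 : 1 ≤ x0 ℓ := aux_one_le_x0 hℓ.1 hℓ.2
    have hs : ((x0 ℓ - 1)/ℓ^2) * (x0 ℓ + 1) = ((x0 ℓ)^2 - 1) / ℓ^2 := by
      field_simp; ring
    have hsq : Real.sqrt (((x0 ℓ - 1)/ℓ^2) * (x0 ℓ + 1)) = Real.sqrt ((x0 ℓ)^2 - 1) / ℓ := by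
      rw [hs, Real.sqrt_div (by nlinarith), Real.sqrt_sq hl0.le]
    rw [hsq, X0]
    field_simp
    ring
  rw [tendsto_congr' hrew]
  have h1 : Tendsto (fun ℓ : ℝ => -(ℓ * ((x0 ℓ - 1)/ℓ^2))) (𝓝[>] (0:ℝ)) (𝓝 0) := by
    have hid : Tendsto (fun ℓ : ℝ => ℓ) (𝓝[>] (0:ℝ)) (𝓝 0) :=
      tendsto_id.mono_left nhdsWithin_le_nhds
    have := (hid.mul aux_h_tendsto).neg
    simpa using this
  have h2 : Tendsto (fun ℓ : ℝ => Real.sqrt (((x0 ℓ - 1)/ℓ^2) * (x0 ℓ + 1)))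
      (𝓝[>] (0:ℝ)) (𝓝 (Real.sqrt (1 + Real.pi^2))) := by
    have hx1 : Tendsto (fun ℓ : ℝ => x0 ℓ + 1) (𝓝[>] (0:ℝ)) (𝓝 2) := by
      have := aux_x0_tendsto.add (tendsto_const_nhds (x := (1:ℝ)))
      norm_num at this
      exact this
    have := (aux_h_tendsto.mul hx1).sqrt
    convert this using 2
    ring
  have := h1.add h2
  simpa using this

theorem sup_one_sub_X0_div :
    sSup ((fun ℓ : ℝ => (1 - X0 ℓ) / ℓ) '' Set.Ioo (0 : ℝ) (1 / 2)) =
      Real.sqrt (1 + Real.pi ^ 2) := by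
  have hne : ((fun ℓ : ℝ => (1 - X0 ℓ) / ℓ) '' Set.Ioo (0 : ℝ) (1 / 2)).Nonempty :=
    ⟨_, ⟨1/4, ⟨by norm_num, by norm_num⟩, rfl⟩⟩
  refine IsLUB.csSup_eq ⟨?_, ?_⟩ hne
  · rintro y ⟨ℓ, hℓ, rfl⟩
    exact aux_upper hℓ.1 hℓ.2
  · intro b hb
    refine le_of_tendsto aux_f_tendsto ?_
    filter_upwards [Ioo_mem_nhdsGT (show (0:ℝ) < 1/2 by norm_num)]
      with ℓ hℓ
    exact hb ⟨ℓ, hℓ, rfl⟩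
end

section
/- Let f be a non-trivial analytic solution of f'' + A f = 0 on 𝔻, where A is analytic and satisfies sup_{z∈𝔻} (1-|z|²)²|A(z)| < ∞. Then the zero-sequence of f is separated in the pseudo-hyperbolic metric: there exists δ ∈ (0,1) with ρ(z_j, z_k) > δ for any two distinct zeros z_j, z_k of f. -/
open Metric Set intervalIntegral

/-- Pseudo-hyperbolic distance on the unit disc. -/
noncomputable def pd (z w : ℂ) : ℝ :=
  ‖z - w‖ / ‖1 - (starRingEnd ℂ) z * w‖

/-- Second-order Taylor estimate on `[0,1]`. -/
lemma taylor2_bound (g g' g'' : ℝ → ℂ) (C : ℝ)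
    (h1 : ∀ t ∈ Icc (0:ℝ) 1, HasDerivAt g (g' t) t)
    (h2 : ∀ t ∈ Icc (0:ℝ) 1, HasDerivAt g' (g'' t) t)
    (hg''c : ContinuousOn g'' (Icc 0 1))
    (hC : ∀ t ∈ Icc (0:ℝ) 1, ‖g'' t‖ ≤ C) :
    ‖g 1 - g 0 - g' 0‖ ≤ C / 2 := by
  have hIcc : uIcc (0:ℝ) 1 = Icc 0 1 := uIcc_of_le zero_le_one
  have hg'c : ContinuousOn g' (Icc 0 1) := fun t ht => (h2 t ht).continuousAt.continuousWithinAt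
  have key1 : ∀ t ∈ Icc (0:ℝ) 1, ‖g' t - g' 0‖ ≤ C * t := by
    intro t ht
    have hsub : uIcc (0:ℝ) t ⊆ Icc 0 1 := by
      rw [uIcc_of_le ht.1]; exact Icc_subset_Icc le_rfl ht.2
    have : (∫ s in (0:ℝ)..t, g'' s) = g' t - g' 0 := by
      apply integral_eq_sub_of_hasDerivAt (fun s hs => h2 s (hsub hs))
      exact (hg''c.mono hsub).intervalIntegrable
    rw [← this]
    calc ‖∫ s in (0:ℝ)..t, g'' s‖ ≤ C * |t - 0| := by
          apply norm_integral_le_of_norm_le_const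
          intro s hs
          exact hC s (hsub (uIoc_subset_uIcc hs))
      _ = C * t := by rw [sub_zero, abs_of_nonneg ht.1]
  have h3 : (∫ t in (0:ℝ)..1, g' t) = g 1 - g 0 := by
    apply integral_eq_sub_of_hasDerivAt (fun t ht => h1 t (hIcc ▸ ht))
    exact (hIcc ▸ hg'c).intervalIntegrable
  have h4 : g 1 - g 0 - g' 0 = ∫ t in (0:ℝ)..1, (g' t - g' 0) := by
    rw [integral_sub ((hIcc ▸ hg'c).intervalIntegrable) intervalIntegrable_const, h3,
      integral_const]
    simp
  rw [h4]
  have h5 : ‖∫ t in (0:ℝ)..1, (g' t - g' 0)‖ ≤ |∫ t in (0:ℝ)..1, C * t| := by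
    refine (norm_integral_le_of_norm_le zero_le_one ?_ ?_).trans (le_abs_self _)
    · exact Filter.Eventually.of_forall fun t ht => key1 t (Ioc_subset_Icc_self ht)
    · exact (continuous_const.mul continuous_id).intervalIntegrable 0 1
  calc ‖∫ t in (0:ℝ)..1, (g' t - g' 0)‖ ≤ |∫ t in (0:ℝ)..1, C * t| := h5
    _ = C / 2 := by
        rw [integral_const_mul, integral_id]
        rw [abs_of_nonneg]
        · ring
        · have := (norm_nonneg (g'' 0)).trans (hC 0 (by norm_num))
          positivity

/-- line helper -/
lemma hasDerivAt_line {h : ℂ → ℂ} {h' c v : ℂ} {t : ℝ}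
    (hd : HasDerivAt h h' (c + t • v)) :
    HasDerivAt (fun s : ℝ => h (c + s • v)) (v * h') t := by
  have hl : HasDerivAt (fun s : ℝ => c + s • v) ((1:ℝ) • v) t :=
    ((hasDerivAt_id t).smul_const v).const_add c
  have := hd.scomp t hl
  convert this using 1
  · rfl
  · rfl
  · simp [mul_comm]

lemma zero_free_disc (A f : ℂ → ℂ)
    (hf : DifferentiableOn ℂ f (ball (0 : ℂ) 1))
    (hode : ∀ z ∈ ball (0 : ℂ) 1, deriv (deriv f) z + A z * f z = 0)
    (hnt : ∃ z ∈ ball (0 : ℂ) 1, f z ≠ 0)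
    (M ε : ℝ) (hM : 0 ≤ M)
    (hbd : ∀ z ∈ ball (0 : ℂ) 1, (1 - ‖z‖ ^ 2) ^ 2 * ‖A z‖ ≤ M)
    (hε1 : 0 < ε) (hε2 : ε ≤ 1/4) (hε3 : 4 * M * ε ^ 2 ≤ 1/2)
    (a b : ℂ) (ha : a ∈ ball (0 : ℂ) 1) (hb : b ∈ ball (0 : ℂ) 1)
    (hfa : f a = 0) (hfb : f b = 0) (hne : a ≠ b) :
    ε * (1 - ‖a‖) < ‖b - a‖ := by
  have hao : ‖a‖ = ‖a‖ := rfl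
  have ha1 : ‖a‖ < 1 := by simpa using ha
  have h1a : (0:ℝ) < 1 - ‖a‖ := by linarith
  set ρ : ℝ := ε * (1 - ‖a‖) with hρdef
  have hρ : 0 < ρ := mul_pos hε1 h1a
  set S : Set ℂ := closedBall a ρ with hSdef
  have hS : S ⊆ ball (0 : ℂ) 1 := by
    intro z hz
    have hd : ‖z - a‖ ≤ ρ := by simpa [hSdef, dist_eq_norm] using hz
    have : ‖z‖ ≤ ‖a‖ + ρ := by
      calc ‖z‖ = ‖a + (z - a)‖ := by ring_nf
        _ ≤ ‖a‖ + ‖z - a‖ := norm_add_le _ _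
        _ ≤ ‖a‖ + ρ := by linarith
    have : ‖z‖ < 1 := by nlinarith
    simpa using this
  -- half-way norm bound
  have hz1 : ∀ z ∈ S, (1 - ‖a‖) / 2 ≤ 1 - ‖z‖ := by
    intro z hz
    have hd : ‖z - a‖ ≤ ρ := by simpa [hSdef, dist_eq_norm] using hz
    have : ‖z‖ ≤ ‖a‖ + ρ :=
      calc ‖z‖ = ‖a + (z - a)‖ := by ring_nf
        _ ≤ ‖a‖ + ‖z - a‖ := norm_add_le _ _
        _ ≤ ‖a‖ + ρ := by linarith
    nlinarith
  set K : ℝ := 4 * M / (1 - ‖a‖) ^ 2 with hKdef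
  have hK0 : 0 ≤ K := by positivity
  have h1ne : ((1:ℝ) - ‖a‖) ^ 2 ≠ 0 := by positivity
  have hKρ : K * ρ ^ 2 ≤ 1/2 := by
    have heq : K * ρ ^ 2 = 4 * M * ε ^ 2 := by
      rw [hKdef, hρdef, mul_pow, div_mul_eq_mul_div, mul_div_assoc, mul_div_assoc,
        div_self h1ne, mul_one]
    rw [heq]; exact hε3
  have hKA : ∀ z ∈ S, ‖A z‖ ≤ K := by
    intro z hz
    have hz' := hS hz
    have hzn : ‖z‖ < 1 := by simpa using hz'
    have h2 : (1 - ‖a‖) / 2 ≤ 1 - ‖z‖ := hz1 z hz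
    have h3 : (0:ℝ) < 1 - ‖z‖ ^ 2 := by nlinarith [norm_nonneg z]
    have h4 := hbd z hz'
    have h5 : ‖A z‖ ≤ M / (1 - ‖z‖ ^ 2) ^ 2 := by
      rw [le_div_iff₀ (by positivity)]
      calc ‖A z‖ * (1 - ‖z‖ ^ 2) ^ 2 = (1 - ‖z‖ ^ 2) ^ 2 * ‖A z‖ := by ring
        _ ≤ M := h4
    have e1 : (1 - ‖a‖) / 2 ≤ 1 - ‖z‖ ^ 2 := by nlinarith [norm_nonneg z]
    have h6 : (1 - ‖a‖) ^ 2 / 4 ≤ (1 - ‖z‖ ^ 2) ^ 2 := by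
      have := pow_le_pow_left₀ (by positivity : (0:ℝ) ≤ (1 - ‖a‖) / 2) e1 2
      calc (1 - ‖a‖) ^ 2 / 4 = ((1 - ‖a‖) / 2) ^ 2 := by ring
        _ ≤ (1 - ‖z‖ ^ 2) ^ 2 := this
    calc ‖A z‖ ≤ M / (1 - ‖z‖ ^ 2) ^ 2 := h5
      _ ≤ M / ((1 - ‖a‖) ^ 2 / 4) := by
          apply div_le_div_of_nonneg_left hM (by positivity) h6
      _ = K := by rw [hKdef, div_div_eq_mul_div, mul_comm]
  -- analyticity
  have han : AnalyticOnNhd ℂ f (ball (0:ℂ) 1) := hf.analyticOnNhd isOpen_ball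
  have han1 : AnalyticOnNhd ℂ (deriv f) (ball (0:ℂ) 1) := han.deriv
  have han2 : AnalyticOnNhd ℂ (deriv (deriv f)) (ball (0:ℂ) 1) := han1.deriv
  have hode' : ∀ z ∈ ball (0:ℂ) 1, deriv (deriv f) z = -(A z * f z) := fun z hz =>
    eq_neg_of_add_eq_zero_left (hode z hz)
  -- max of ‖f‖ on S
  obtain ⟨zs, hzs, hzmax⟩ := (isCompact_closedBall a ρ).exists_isMaxOn
    ⟨a, mem_closedBall_self hρ.le⟩ ((hf.continuousOn.mono hS).norm)
  set m : ℝ := ‖f zs‖ with hmdef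
  have hm0 : 0 ≤ m := norm_nonneg _
  have hm : ∀ z ∈ S, ‖f z‖ ≤ m := fun z hz => hzmax hz
  -- Taylor estimate on S
  have tay : ∀ z ∈ S, ‖f z - f a - (z - a) * deriv f a‖ ≤ ‖z - a‖ ^ 2 * (K * m) / 2 := by
    intro z hz
    set v : ℂ := z - a with hvdef
    have hvρ : ‖v‖ ≤ ρ := by simpa [hSdef, hvdef, dist_eq_norm] using hz
    have hseg : ∀ t ∈ Icc (0:ℝ) 1, a + t • v ∈ S := by
      intro t ht
      have : ‖(a + t • v) - a‖ = t * ‖v‖ := by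
        rw [add_sub_cancel_left, norm_smul, Real.norm_of_nonneg ht.1]
      have h2 : ‖(a + t • v) - a‖ ≤ ρ := by
        rw [this]
        calc t * ‖v‖ ≤ 1 * ρ := by
              apply mul_le_mul ht.2 hvρ (norm_nonneg v) zero_le_one
          _ = ρ := one_mul ρ
      rw [hSdef, mem_closedBall, dist_eq_norm]
      exact h2
    have hsegb : ∀ t ∈ Icc (0:ℝ) 1, a + t • v ∈ ball (0:ℂ) 1 := fun t ht => hS (hseg t ht)
    have h1 : ∀ t ∈ Icc (0:ℝ) 1,
        HasDerivAt (fun s : ℝ => f (a + s • v)) (v * deriv f (a + t • v)) t := fun t ht =>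
      hasDerivAt_line ((han _ (hsegb t ht)).differentiableAt.hasDerivAt)
    have h2 : ∀ t ∈ Icc (0:ℝ) 1,
        HasDerivAt (fun s : ℝ => v * deriv f (a + s • v))
          (v * (v * deriv (deriv f) (a + t • v))) t := by
      intro t ht
      have := hasDerivAt_line ((han1 _ (hsegb t ht)).differentiableAt.hasDerivAt)
      exact this.const_mul v
    have hline : Continuous (fun t : ℝ => a + t • v) :=
      continuous_const.add (continuous_id.smul continuous_const)
    have hcont : ContinuousOn (fun t : ℝ => v * (v * deriv (deriv f) (a + t • v))) (Icc 0 1) := by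
      apply continuousOn_const.mul
      apply continuousOn_const.mul
      exact (han2.continuousOn).comp hline.continuousOn (fun t ht => hsegb t ht)
    have hCb : ∀ t ∈ Icc (0:ℝ) 1, ‖v * (v * deriv (deriv f) (a + t • v))‖ ≤ ‖v‖ ^ 2 * (K * m) := by
      intro t ht
      have hw := hsegb t ht
      rw [hode' _ hw]
      have heq : ‖v * (v * -(A (a + t • v) * f (a + t • v)))‖
          = ‖v‖ ^ 2 * (‖A (a + t • v)‖ * ‖f (a + t • v)‖) := by
        rw [norm_mul, norm_mul, norm_neg, norm_mul, sq]; ring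
      rw [heq]
      apply mul_le_mul_of_nonneg_left _ (by positivity)
      apply mul_le_mul (hKA _ (hseg t ht)) (hm _ (hseg t ht)) (norm_nonneg _) hK0
    have key := taylor2_bound (fun s : ℝ => f (a + s • v)) (fun s => v * deriv f (a + s • v))
      (fun s => v * (v * deriv (deriv f) (a + s • v))) (‖v‖ ^ 2 * (K * m)) h1 h2 hcont hCb
    have e1 : a + (1:ℝ) • v = z := by rw [one_smul, hvdef]; ring
    have e0 : a + (0:ℝ) • v = a := by rw [zero_smul, add_zero]
    simp only [e1, e0] at key
    exact key
  -- bound on m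
  have hKz : ∀ z ∈ S, ‖z - a‖ ^ 2 * (K * m) / 2 ≤ m / 4 := by
    intro z hz
    have hvρ : ‖z - a‖ ≤ ρ := by simpa [hSdef, dist_eq_norm] using hz
    have : ‖z - a‖ ^ 2 * K ≤ 1/2 := by
      calc ‖z - a‖ ^ 2 * K ≤ ρ ^ 2 * K := by
            apply mul_le_mul_of_nonneg_right _ hK0
            exact pow_le_pow_left₀ (norm_nonneg _) hvρ 2
        _ = K * ρ ^ 2 := by ring
        _ ≤ 1/2 := hKρ
    nlinarith [norm_nonneg (z - a)]
  have hmb : m ≤ ρ * ‖deriv f a‖ + m / 4 := by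
    have h1 := tay zs hzs
    rw [hfa, sub_zero] at h1
    have h2 : m - ‖(zs - a) * deriv f a‖ ≤ ‖f zs - (zs - a) * deriv f a‖ :=
      norm_sub_norm_le _ _
    have h3 : ‖(zs - a) * deriv f a‖ ≤ ρ * ‖deriv f a‖ := by
      rw [norm_mul]
      apply mul_le_mul_of_nonneg_right _ (norm_nonneg _)
      simpa [dist_eq_norm] using hzs
    have h4 := hKz zs hzs
    linarith [h2.trans (h1.trans h4)]
  -- deriv f a ≠ 0
  have hda : deriv f a ≠ 0 := by
    intro h0
    rw [h0, norm_zero, mul_zero, zero_add] at hmb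
    have hm0' : m = 0 := le_antisymm (by linarith) hm0
    have hz0 : ∀ z ∈ S, f z = 0 := by
      intro z hz
      have := hm z hz
      rw [hm0'] at this
      exact norm_le_zero_iff.mp this
    have hev : f =ᶠ[nhds a] 0 := by
      filter_upwards [closedBall_mem_nhds a hρ] with z hz
      exact hz0 z hz
    have := han.eqOn_zero_of_preconnected_of_eventuallyEq_zero
      ((convex_ball (0:ℂ) 1).isPreconnected) ha hev
    obtain ⟨w, hw, hfw⟩ := hnt
    exact hfw (this hw)
  have hda0 : 0 < ‖deriv f a‖ := norm_pos_iff.mpr hda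
  have hmf : m ≤ 2 * (ρ * ‖deriv f a‖) := by linarith
  -- main contradiction
  by_contra hcon
  push_neg at hcon
  have hbS : b ∈ S := by
    rw [hSdef, mem_closedBall, dist_eq_norm, hρdef]
    exact hcon
  have hb0 : (0:ℝ) < ‖b - a‖ := by
    rw [norm_pos_iff, sub_ne_zero]
    exact fun h => hne h.symm
  have h1 := tay b hbS
  rw [hfa, hfb] at h1
  have h2 : ‖b - a‖ * ‖deriv f a‖ ≤ ‖b - a‖ ^ 2 * (K * m) / 2 := by
    have e : ((0:ℂ) - 0 - (b - a) * deriv f a) = -((b - a) * deriv f a) := by ring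
    rw [e, norm_neg, norm_mul] at h1
    exact h1
  have h3 : ‖b - a‖ ^ 2 * (K * m) / 2 ≤ ‖b - a‖ ^ 2 * K * ‖deriv f a‖ * ρ := by
    have hmul := mul_le_mul_of_nonneg_left hmf (mul_nonneg (pow_nonneg (norm_nonneg (b - a)) 2) hK0)
    calc ‖b - a‖ ^ 2 * (K * m) / 2 = (‖b - a‖ ^ 2 * K) * m / 2 := by ring
      _ ≤ (‖b - a‖ ^ 2 * K) * (2 * (ρ * ‖deriv f a‖)) / 2 := by linarith
      _ = ‖b - a‖ ^ 2 * K * ‖deriv f a‖ * ρ := by ring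
  have h4 : (1:ℝ) ≤ ‖b - a‖ * K * ρ := by
    have h5 := h2.trans h3
    have h6 : ‖b - a‖ * ‖deriv f a‖ * 1 ≤ ‖b - a‖ * ‖deriv f a‖ * (‖b - a‖ * K * ρ) := by
      calc ‖b - a‖ * ‖deriv f a‖ * 1 = ‖b - a‖ * ‖deriv f a‖ := mul_one _
        _ ≤ ‖b - a‖ ^ 2 * K * ‖deriv f a‖ * ρ := h5
        _ = ‖b - a‖ * ‖deriv f a‖ * (‖b - a‖ * K * ρ) := by ring
    exact le_of_mul_le_mul_left h6 (by positivity)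
  have h7 : ‖b - a‖ * K * ρ ≤ K * ρ ^ 2 := by
    have hvρ : ‖b - a‖ ≤ ρ := by simpa [hSdef, dist_eq_norm] using hbS
    calc ‖b - a‖ * K * ρ ≤ ρ * K * ρ := by
          apply mul_le_mul_of_nonneg_right (mul_le_mul_of_nonneg_right hvρ hK0) hρ.le
      _ = K * ρ ^ 2 := by ring
  linarith

/-- Schwarz-type separation: zeros of solutions of `f'' + A f = 0` with
`sup (1-|z|²)²|A(z)| < ∞` are separated. -/
theorem zeros_separated_of_bounded_coefficient (A f : ℂ → ℂ)
    (hA : DifferentiableOn ℂ A (ball (0 : ℂ) 1))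
    (hf : DifferentiableOn ℂ f (ball (0 : ℂ) 1))
    (hode : ∀ z ∈ ball (0 : ℂ) 1, deriv (deriv f) z + A z * f z = 0)
    (hnt : ∃ z ∈ ball (0 : ℂ) 1, f z ≠ 0)
    (hbd : ∃ M : ℝ, ∀ z ∈ ball (0 : ℂ) 1, (1 - ‖z‖ ^ 2) ^ 2 * ‖A z‖ ≤ M) :
    ∃ δ : ℝ, 0 < δ ∧ δ < 1 ∧ ∀ z₁ ∈ ball (0 : ℂ) 1, ∀ z₂ ∈ ball (0 : ℂ) 1,
      f z₁ = 0 → f z₂ = 0 → z₁ ≠ z₂ → δ < pd z₁ z₂ := by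
  obtain ⟨M₀, hM₀⟩ := hbd
  set M : ℝ := max M₀ 1 with hMdef
  have hM1 : (1:ℝ) ≤ M := le_max_right _ _
  have hM0 : (0:ℝ) ≤ M := by linarith
  have hbd' : ∀ z ∈ ball (0 : ℂ) 1, (1 - ‖z‖ ^ 2) ^ 2 * ‖A z‖ ≤ M :=
    fun z hz => (hM₀ z hz).trans (le_max_left _ _)
  set ε : ℝ := min (1/4) (Real.sqrt (8 * M))⁻¹ with hεdef
  have h8M : (0:ℝ) < 8 * M := by linarith
  have hsq : 0 < Real.sqrt (8 * M) := Real.sqrt_pos.mpr h8M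
  have hε1 : 0 < ε := lt_min (by norm_num) (inv_pos.mpr hsq)
  have hε2 : ε ≤ 1/4 := min_le_left _ _
  have hε3 : 4 * M * ε ^ 2 ≤ 1/2 := by
    have h1 : ε ≤ (Real.sqrt (8 * M))⁻¹ := min_le_right _ _
    have h2 : ε ^ 2 ≤ ((Real.sqrt (8 * M))⁻¹) ^ 2 := pow_le_pow_left₀ hε1.le h1 2
    have h3 : ((Real.sqrt (8 * M))⁻¹) ^ 2 = (8 * M)⁻¹ := by
      rw [← Real.sqrt_inv, Real.sq_sqrt (by positivity)]
    rw [h3] at h2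
    calc 4 * M * ε ^ 2 ≤ 4 * M * (8 * M)⁻¹ := by
          apply mul_le_mul_of_nonneg_left h2 (by linarith)
      _ = 1/2 := by field_simp; ring
  refine ⟨ε / (2 + ε) / 2, by positivity, ?_, ?_⟩
  · have : ε / (2 + ε) < 1 := by
      rw [div_lt_one (by linarith)]; linarith
    linarith
  intro a ha b hb hfa hfb hne
  have key := zero_free_disc A f hf hode hnt M ε hM0 hbd' hε1 hε2 hε3 a b ha hb hfa hfb hne
  -- now pseudo-hyperbolic bound
  have ha1 : ‖a‖ < 1 := by simpa using ha
  have hb1 : ‖b‖ < 1 := by simpa using hb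
  have hab0 : 0 < ‖a - b‖ := by
    rw [norm_pos_iff]
    exact sub_ne_zero.mpr hne
  have hba : ‖b - a‖ = ‖a - b‖ := by
    rw [← norm_neg, neg_sub]
  rw [hba] at key
  have hden_pos : 0 < ‖1 - (starRingEnd ℂ) a * b‖ := by
    rw [norm_pos_iff, sub_ne_zero]
    intro h
    have : ‖(starRingEnd ℂ) a * b‖ = 1 := by rw [← h]; simp
    rw [norm_mul, Complex.norm_conj] at this
    nlinarith [norm_nonneg a, norm_nonneg b]
  have hden : ‖1 - (starRingEnd ℂ) a * b‖ < (2 / ε + 1) * ‖a - b‖ := by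
    have e1 : (1 : ℂ) - (starRingEnd ℂ) a * b
        = (1 - (starRingEnd ℂ) a * a) + (starRingEnd ℂ) a * (a - b) := by ring
    have e2 : ‖1 - (starRingEnd ℂ) a * a‖ = 1 - ‖a‖ ^ 2 := by
      rw [← Complex.normSq_eq_conj_mul_self]
      have : ((1 : ℂ) - (Complex.normSq a : ℂ)) = ((1 - Complex.normSq a : ℝ) : ℂ) := by
        push_cast; ring
      rw [this, Complex.norm_real, Real.norm_eq_abs, Complex.normSq_eq_norm_sq, abs_of_nonneg (by nlinarith [norm_nonneg a])]
    have e3 : ‖(starRingEnd ℂ) a * (a - b)‖ ≤ ‖a - b‖ := by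
      rw [norm_mul, Complex.norm_conj]
      nlinarith [norm_nonneg (a - b)]
    have e4 : 1 - ‖a‖ ^ 2 ≤ 2 * (1 - ‖a‖) := by
      nlinarith [norm_nonneg a]
    have e5 : 2 * (1 - ‖a‖) < (2 / ε) * ‖a - b‖ := by
      have := (mul_lt_mul_of_pos_left key (by positivity : (0:ℝ) < 2 / ε))
      calc 2 * (1 - ‖a‖) = (2 / ε) * (ε * (1 - ‖a‖)) := by
            field_simp
        _ < (2 / ε) * ‖a - b‖ := this
    calc ‖1 - (starRingEnd ℂ) a * b‖
        ≤ ‖1 - (starRingEnd ℂ) a * a‖ + ‖(starRingEnd ℂ) a * (a - b)‖ := by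
          rw [e1]; exact norm_add_le _ _
      _ ≤ 2 * (1 - ‖a‖) + ‖a - b‖ := by
          rw [e2] at *; linarith
      _ < (2 / ε) * ‖a - b‖ + ‖a - b‖ := by linarith
      _ = (2 / ε + 1) * ‖a - b‖ := by ring
  have hpd : ε / (2 + ε) < pd a b := by
    unfold pd
    have h1 : ε / (2 + ε) = ‖a - b‖ / ((2 / ε + 1) * ‖a - b‖) := by
      rw [div_mul_eq_div_div_swap, div_self (ne_of_gt hab0)]
      rw [eq_div_iff (by positivity)]
      field_simp
    rw [h1]
    exact div_lt_div_of_pos_left hab0 hden_pos hden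
  have hX : 0 < ε / (2 + ε) := by positivity
  linarith [hpd, hX]
end

section
/- Let f be a non-trivial analytic solution of f'' + A f = 0 on 𝔻 with A analytic, and let z_j ≠ z_k be two zeros of f. Then there exists a point ξ on the hyperbolic geodesic segment ⟨z_j, z_k⟩ with (1-|ξ|²)² |A(ξ)| > 1. -/
open Metric Complex Set Filter

/-- The hyperbolic geodesic segment joining `z` and `w` in the unit disc: the image of the
Euclidean segment `[0, (w-z)/(1-z̄w)]` under the Möbius map `u ↦ (u+z)/(1+z̄u)`. -/
noncomputable def geoSeg (z w : ℂ) : Set ℂ :=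
  (fun t : ℝ =>
    ((t : ℂ) * ((w - z) / (1 - (starRingEnd ℂ) z * w)) + z) /
      (1 + (starRingEnd ℂ) z * ((t : ℂ) * ((w - z) / (1 - (starRingEnd ℂ) z * w))))) ''
    Set.Icc (0 : ℝ) 1

/-- Möbius normSq identity. -/
lemma mobius_normSq (z w : ℂ) :
    Complex.normSq (1 + (starRingEnd ℂ) z * w) - Complex.normSq (w + z)
      = (1 - Complex.normSq z) * (1 - Complex.normSq w) := by
  simp only [Complex.normSq_apply, Complex.add_re, Complex.add_im, Complex.mul_re,
    Complex.mul_im, Complex.one_re, Complex.one_im, Complex.conj_re, Complex.conj_im]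
  ring

lemma mobius_den_ne {z w : ℂ} (hz : Complex.normSq z < 1) (hw : Complex.normSq w ≤ 1) :
    1 + (starRingEnd ℂ) z * w ≠ 0 := by
  intro h
  have h1 : (starRingEnd ℂ) z * w = -1 := by linear_combination h
  have h2 : Complex.normSq ((starRingEnd ℂ) z * w) = 1 := by rw [h1]; simp
  rw [Complex.normSq_mul, Complex.normSq_conj] at h2
  nlinarith [Complex.normSq_nonneg w, Complex.normSq_nonneg z]

lemma mobius_normSq_lt {z w : ℂ} (hz : Complex.normSq z < 1) (hw : Complex.normSq w < 1) :
    Complex.normSq ((w + z) / (1 + (starRingEnd ℂ) z * w)) < 1 := by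
  have hden := mobius_den_ne hz hw.le
  rw [Complex.normSq_div, div_lt_one (Complex.normSq_pos.2 hden)]
  have hid := mobius_normSq z w
  nlinarith [mul_pos (by linarith : (0:ℝ) < 1 - Complex.normSq z)
    (by linarith : (0:ℝ) < 1 - Complex.normSq w)]

/-- composition of a ℂ-differentiable map with a real-parametrized curve -/
lemma comp_hasDerivAt_real {F : ℂ → ℂ} {F' : ℂ} {γ : ℝ → ℂ} {γ' : ℂ} {t : ℝ}
    (hF : HasDerivAt F F' (γ t)) (hγ : HasDerivAt γ γ' t) :
    HasDerivAt (fun s => F (γ s)) (γ' * F') t := by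
  have h := (hF.hasFDerivAt.restrictScalars ℝ).comp_hasDerivAt t hγ
  rw [mul_comm]; exact hF.comp t hγ

lemma conj_hasDerivAt {g : ℝ → ℂ} {g' : ℂ} {t : ℝ} (hg : HasDerivAt g g' t) :
    HasDerivAt (fun s => (starRingEnd ℂ) (g s)) ((starRingEnd ℂ) g') t := by
  have h := (Complex.conjCLE.toContinuousLinearMap.hasFDerivAt
    (x := g t)).comp_hasDerivAt t hg
  exact hg.star

lemma re_hasDerivAt {g : ℝ → ℂ} {g' : ℂ} {t : ℝ} (hg : HasDerivAt g g' t) :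
    HasDerivAt (fun s => (g s).re) g'.re t := by
  have h := (Complex.reCLM.hasFDerivAt (x := g t)).comp_hasDerivAt t hg
  exact h

/-- Mean value bound: lower bound on derivative gives lower bound on increment. -/
lemma mvt_ge {f f' : ℝ → ℝ} {a b c : ℝ} (hab : a < b)
    (hd : ∀ x ∈ Set.Ioo a b, HasDerivAt f (f' x) x)
    (hcont : ContinuousOn f (Set.Icc a b))
    (hge : ∀ x ∈ Set.Ioo a b, c ≤ f' x) : c * (b - a) ≤ f b - f a := by
  obtain ⟨x, hx, hslope⟩ := exists_hasDerivAt_eq_slope f f' hab hcont hd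
  have h1 : c ≤ (f b - f a) / (b - a) := hslope ▸ hge x hx
  have h2 : 0 < b - a := by linarith
  calc c * (b - a) ≤ ((f b - f a) / (b - a)) * (b - a) :=
        mul_le_mul_of_nonneg_right h1 h2.le
    _ = f b - f a := by field_simp

lemma mvt_le {f f' : ℝ → ℝ} {a b c : ℝ} (hab : a < b)
    (hd : ∀ x ∈ Set.Ioo a b, HasDerivAt f (f' x) x)
    (hcont : ContinuousOn f (Set.Icc a b))
    (hle : ∀ x ∈ Set.Ioo a b, f' x ≤ c) : f b - f a ≤ c * (b - a) := by
  obtain ⟨x, hx, hslope⟩ := exists_hasDerivAt_eq_slope f f' hab hcont hd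
  have h1 : (f b - f a) / (b - a) ≤ c := hslope ▸ hle x hx
  have h2 : 0 < b - a := by linarith
  calc f b - f a = ((f b - f a) / (b - a)) * (b - a) := by field_simp
    _ ≤ c * (b - a) := mul_le_mul_of_nonneg_right h1 h2.le

/-- Real Sturm-type comparison: `N = |g|²` of a solution cannot vanish at `0` and `b`
while staying positive in between, if the comparison inequality holds. -/
lemma sturm_real (N N1 N2 : ℝ → ℝ) (r b : ℝ)
    (hr0 : 0 ≤ r) (hr1 : r < 1) (hb0 : 0 < b) (hb1 : b ≤ 1)
    (hN : ∀ t ∈ Set.Icc (0:ℝ) b, HasDerivAt N (N1 t) t)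
    (hN1 : ∀ t ∈ Set.Icc (0:ℝ) b, HasDerivAt N1 (N2 t) t)
    (hNnn : ∀ t, 0 ≤ N t)
    (hN00 : N 0 = 0) (hNb : N b = 0)
    (hNpos : ∀ t ∈ Set.Ioo (0:ℝ) b, 0 < N t)
    (hkey : ∀ t ∈ Set.Ioo (0:ℝ) b,
      -(4 * (r^2 / (1 - r^2*t^2)^2) * (N t)^2) ≤ 2 * N2 t * N t - (N1 t)^2) :
    False := by
  -- positivity of 1 - r²t²
  have hpos : ∀ t ∈ Set.Icc (0:ℝ) b, (0:ℝ) < 1 - r^2*t^2 := by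
    intro t ht
    have h1 : t^2 ≤ 1 := by nlinarith [ht.1, ht.2]
    nlinarith [sq_nonneg t, sq_nonneg r]
  set u : ℝ → ℝ := fun t => Real.sqrt (N t) with hu_def
  set v : ℝ → ℝ := fun t => Real.sqrt (1 - r^2*t^2) with hv_def
  set U : ℝ → ℝ := fun t => N1 t / (2 * u t) with hU_def
  set V : ℝ → ℝ := fun t => -(r^2*t) / v t with hV_def
  set W : ℝ → ℝ := fun t => U t * v t - u t * V t with hW_def
  set R : ℝ → ℝ := fun t => u t / v t with hR_def
  have hvpos : ∀ t ∈ Set.Icc (0:ℝ) b, 0 < v t := fun t ht => Real.sqrt_pos.2 (hpos t ht)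
  have hv2 : ∀ t ∈ Set.Icc (0:ℝ) b, (v t)^2 = 1 - r^2*t^2 := fun t ht =>
    Real.sq_sqrt (hpos t ht).le
  have hupos : ∀ t ∈ Set.Ioo (0:ℝ) b, 0 < u t := fun t ht => Real.sqrt_pos.2 (hNpos t ht)
  have hu2 : ∀ t, (u t)^2 = N t := fun t => Real.sq_sqrt (hNnn t)
  have hIoosub : Set.Ioo (0:ℝ) b ⊆ Set.Icc (0:ℝ) b := Set.Ioo_subset_Icc_self
  -- derivative of u
  have hu : ∀ t ∈ Set.Ioo (0:ℝ) b, HasDerivAt u (U t) t := by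
    intro t ht
    have h := (Real.hasDerivAt_sqrt (ne_of_gt (hNpos t ht))).comp t (hN t (hIoosub ht))
    have : 1 / (2 * Real.sqrt (N t)) * N1 t = U t := by
      rw [hU_def]; simp [hu_def]; ring
    rw [← this]; exact h
  -- derivative of v
  have hv : ∀ t ∈ Set.Icc (0:ℝ) b, HasDerivAt v (V t) t := by
    intro t ht
    have hin : HasDerivAt (fun s : ℝ => 1 - r^2*s^2) (-(r^2*(2*t^1))) t := by
      simpa using ((hasDerivAt_pow 2 t).const_mul (r^2)).const_sub 1
    have h := (Real.hasDerivAt_sqrt (ne_of_gt (hpos t ht))).comp t hin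
    have : 1 / (2 * Real.sqrt (1 - r^2*t^2)) * (-(r^2*(2*t^1))) = V t := by
      rw [hV_def]; simp only [hv_def, pow_one]
      have hvne : Real.sqrt (1 - r^2*t^2) ≠ 0 := (Real.sqrt_pos.2 (hpos t ht)).ne'
      field_simp
    rw [← this]; exact h
  -- derivative of U
  set Ud : ℝ → ℝ := fun t => (N2 t * (2 * u t) - N1 t * (2 * U t)) / (2 * u t)^2 with hUd_def
  have hU' : ∀ t ∈ Set.Ioo (0:ℝ) b, HasDerivAt U (Ud t) t := by
    intro t ht
    exact (hN1 t (hIoosub ht)).div ((hu t ht).const_mul 2)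
      (mul_ne_zero two_ne_zero (hupos t ht).ne')
  -- derivative of V
  set Vd : ℝ → ℝ := fun t => (-(r^2*1) * v t - -(r^2*t) * V t) / (v t)^2 with hVd_def
  have hV' : ∀ t ∈ Set.Icc (0:ℝ) b, HasDerivAt V (Vd t) t := by
    intro t ht
    exact (((hasDerivAt_id t).const_mul (r^2)).neg).div (hv t ht) (hvpos t ht).ne'
  -- derivative of W
  set Wd : ℝ → ℝ := fun t => Ud t * v t + U t * V t - (U t * V t + u t * Vd t) with hWd_def
  have hW' : ∀ t ∈ Set.Ioo (0:ℝ) b, HasDerivAt W (Wd t) t := by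
    intro t ht
    exact ((hU' t ht).mul (hv t (hIoosub ht))).sub ((hu t ht).mul (hV' t (hIoosub ht)))
  -- derivative of R
  have hR' : ∀ t ∈ Set.Ioo (0:ℝ) b, HasDerivAt R (W t / (v t)^2) t := by
    intro t ht
    exact (hu t ht).div (hv t (hIoosub ht)) (hvpos t (hIoosub ht)).ne'
  -- nonnegativity of Wd
  have hWdnn : ∀ t ∈ Set.Ioo (0:ℝ) b, 0 ≤ Wd t := by
    intro t ht
    have htI : t ∈ Set.Icc (0:ℝ) b := hIoosub ht
    have hup := hupos t ht
    have hvp := hvpos t htI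
    have hv2t := hv2 t htI
    have hu2t := hu2 t
    set w : ℝ := r^2 / (1 - r^2*t^2)^2 with hw_def
    have hwnn : 0 ≤ w := by
      have := hpos t htI
      positivity
    -- Vd t = -(r^2) / (v t)^3
    have hVdval : Vd t = -(r^2) / (v t)^3 := by
      rw [hVd_def, hV_def]
      field_simp
      linear_combination (-(r^2)) * hv2t
    -- w * v t = r^2 / (v t)^3
    have hwv : w * v t = r^2 / (v t)^3 := by
      rw [hw_def, ← hv2t]
      field_simp
    -- Ud t ≥ -(w * u t)
    have hUdge : -(w * u t) ≤ Ud t := by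
      have hkt := hkey t ht
      have hX : (N2 t * (2 * u t) - N1 t * (2 * U t)) * u t
          = 2 * N2 t * N t - (N1 t)^2 := by
        rw [hU_def]
        field_simp
        linear_combination (2 * N2 t) * hu2t
      have hkt' := hkt
      rw [← hw_def] at hkt'
      have h5 : -(4*w*(u t)^4) ≤ (N2 t * (2 * u t) - N1 t * (2 * U t)) * u t := by
        rw [hX]
        calc -(4*w*(u t)^4) = -(4*w*(N t)^2) := by rw [← hu2t]; ring
          _ ≤ 2 * N2 t * N t - (N1 t)^2 := hkt'
      have h6 : -(4*w*(u t)^3) ≤ N2 t * (2 * u t) - N1 t * (2 * U t) := by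
        nlinarith [h5, hup, mul_pos hup hup]
      rw [hUd_def, le_div_iff₀ (by positivity)]
      calc -(w * u t) * (2 * u t)^2 = -(4*w*(u t)^3) := by ring
        _ ≤ _ := h6
    show 0 ≤ Ud t * v t + U t * V t - (U t * V t + u t * Vd t)
    have h1 : -(w * u t) * v t ≤ Ud t * v t := mul_le_mul_of_nonneg_right hUdge hvp.le
    have h2 : u t * Vd t = -(u t * (r^2 / (v t)^3)) := by rw [hVdval]; ring
    have h3 : w * u t * v t = u t * (r^2 / (v t)^3) := by rw [← hwv]; ring
    linarith
  -- monotonicity of W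
  have hWmono : ∀ s ∈ Set.Ioo (0:ℝ) b, ∀ t ∈ Set.Ioo (0:ℝ) b, s ≤ t → W s ≤ W t := by
    intro s hs t ht hst
    rcases eq_or_lt_of_le hst with h | h
    · rw [h]
    · have hsub : Set.Icc s t ⊆ Set.Ioo (0:ℝ) b := fun x hx =>
        ⟨lt_of_lt_of_le hs.1 hx.1, lt_of_le_of_lt hx.2 ht.2⟩
      have hsub' : Set.Ioo s t ⊆ Set.Ioo (0:ℝ) b := fun x hx => hsub ⟨hx.1.le, hx.2.le⟩
      have := mvt_ge h (fun x hx => hW' x (hsub' hx))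
        (fun x hx => (hW' x (hsub hx)).continuousAt.continuousWithinAt)
        (fun x hx => hWdnn x (hsub' hx))
      linarith
  -- limits of R at the endpoints
  have hucont0 : ContinuousAt u 0 := by
    have hgc : ContinuousAt N 0 := (hN 0 ⟨le_refl 0, hb0.le⟩).continuousAt
    exact Real.continuous_sqrt.continuousAt.comp hgc
  have hvcont0 : ContinuousAt v 0 := by
    have : ContinuousAt (fun s : ℝ => 1 - r^2*s^2) 0 := by fun_prop
    exact Real.continuous_sqrt.continuousAt.comp this
  have hR0 : Filter.Tendsto R (nhdsWithin 0 (Set.Ioi 0)) (nhds 0) := by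
    have hv0 : v 0 = 1 := by simp [hv_def]
    have hu0 : u 0 = 0 := by simp [hu_def, hN00]
    have : ContinuousAt R 0 := by
      apply hucont0.div hvcont0
      rw [hv0]; norm_num
    have h := this.tendsto.mono_left (nhdsWithin_le_nhds (s := Set.Ioi (0:ℝ)))
    have hR00 : R 0 = 0 := by show u 0 / v 0 = 0; rw [hu0, hv0]; norm_num
    rw [hR00] at h
    exact h
  have hucontb : ContinuousAt u b := by
    have hgc : ContinuousAt N b := (hN b ⟨hb0.le, le_refl b⟩).continuousAt
    exact Real.continuous_sqrt.continuousAt.comp hgc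
  have hvcontb : ContinuousAt v b := by
    have : ContinuousAt (fun s : ℝ => 1 - r^2*s^2) b := by fun_prop
    exact Real.continuous_sqrt.continuousAt.comp this
  have hRb : Filter.Tendsto R (nhdsWithin b (Set.Iio b)) (nhds 0) := by
    have hub : u b = 0 := by simp [hu_def, hNb]
    have : ContinuousAt R b := by
      apply hucontb.div hvcontb
      exact (hvpos b ⟨hb0.le, le_refl b⟩).ne'
    have h := this.tendsto.mono_left (nhdsWithin_le_nhds (s := Set.Iio b))
    have hRbb : R b = 0 := by show u b / v b = 0; rw [hub]; norm_num
    rw [hRbb] at h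
    exact h
  have hRnn : ∀ t ∈ Set.Ioo (0:ℝ) b, 0 ≤ R t := by
    intro t ht
    exact div_nonneg (Real.sqrt_nonneg _) (Real.sqrt_nonneg _)
  have hv2le1 : ∀ t ∈ Set.Icc (0:ℝ) b, (v t)^2 ≤ 1 := by
    intro t ht
    rw [hv2 t ht]
    nlinarith [sq_nonneg r, sq_nonneg t]
  -- Claim 1 : W ≥ 0 on Ioo
  have hWnn : ∀ t ∈ Set.Ioo (0:ℝ) b, 0 ≤ W t := by
    intro t0 ht0
    by_contra hneg
    push_neg at hneg
    have hstep : ∀ ε ∈ Set.Ioo (0:ℝ) t0, R t0 ≤ W t0 * (t0 - ε) + R ε := by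
      intro ε hε
      have hsub : Set.Icc ε t0 ⊆ Set.Ioo (0:ℝ) b := fun x hx =>
        ⟨lt_of_lt_of_le hε.1 hx.1, lt_of_le_of_lt hx.2 ht0.2⟩
      have hsub' : Set.Ioo ε t0 ⊆ Set.Ioo (0:ℝ) b := fun x hx => hsub ⟨hx.1.le, hx.2.le⟩
      have hder : ∀ x ∈ Set.Ioo ε t0, W x / (v x)^2 ≤ W t0 := by
        intro x hx
        have hWx : W x ≤ W t0 := hWmono x (hsub' hx) t0 ht0 hx.2.le
        have hxI : x ∈ Set.Icc (0:ℝ) b := hIoosub (hsub' hx)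
        have h1 : 0 < (v x)^2 := pow_pos (hvpos x hxI) 2
        rw [div_le_iff₀ h1]
        nlinarith [hv2le1 x hxI, hneg]
      have := mvt_le hε.2 (fun x hx => hR' x (hsub' hx))
        (fun x hx => (hR' x (hsub hx)).continuousAt.continuousWithinAt) hder
      linarith
    have htends : Filter.Tendsto (fun ε => W t0 * (t0 - ε) + R ε)
        (nhdsWithin 0 (Set.Ioi 0)) (nhds (W t0 * t0 + 0)) := by
      apply Filter.Tendsto.add _ hR0
      have : Filter.Tendsto (fun ε : ℝ => ε) (nhdsWithin 0 (Set.Ioi 0)) (nhds 0) :=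
        tendsto_id.mono_left nhdsWithin_le_nhds
      have h2 := (tendsto_const_nhds (x := t0) (f := nhdsWithin (0:ℝ) (Set.Ioi 0))).sub this
      simpa using (tendsto_const_nhds (x := W t0)
        (f := nhdsWithin (0:ℝ) (Set.Ioi 0))).mul h2
    have hfin : R t0 ≤ W t0 * t0 + 0 := by
      apply ge_of_tendsto htends
      filter_upwards [Ioo_mem_nhdsGT_of_mem (Set.left_mem_Ico.2 ht0.1)] with ε hε
      exact hstep ε hε
    have : 0 ≤ R t0 := hRnn t0 ht0
    nlinarith [ht0.1, hneg]
  -- Claim 2 : W ≤ 0 on Ioo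
  have hWnp : ∀ t ∈ Set.Ioo (0:ℝ) b, W t ≤ 0 := by
    intro t1 ht1
    by_contra hneg
    push_neg at hneg
    have hstep : ∀ t ∈ Set.Ioo t1 b, W t1 * (t - t1) + R t1 ≤ R t := by
      intro t ht
      have hsub : Set.Icc t1 t ⊆ Set.Ioo (0:ℝ) b := fun x hx =>
        ⟨lt_of_lt_of_le ht1.1 hx.1, lt_of_le_of_lt hx.2 ht.2⟩
      have hsub' : Set.Ioo t1 t ⊆ Set.Ioo (0:ℝ) b := fun x hx => hsub ⟨hx.1.le, hx.2.le⟩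
      have hder : ∀ x ∈ Set.Ioo t1 t, W t1 ≤ W x / (v x)^2 := by
        intro x hx
        have hWx : W t1 ≤ W x := hWmono t1 ht1 x (hsub' hx) hx.1.le
        have hxI : x ∈ Set.Icc (0:ℝ) b := hIoosub (hsub' hx)
        have h1 : 0 < (v x)^2 := pow_pos (hvpos x hxI) 2
        rw [le_div_iff₀ h1]
        nlinarith [hv2le1 x hxI, hneg]
      have := mvt_ge ht.1 (fun x hx => hR' x (hsub' hx))
        (fun x hx => (hR' x (hsub hx)).continuousAt.continuousWithinAt) hder
      linarith
    have htends : Filter.Tendsto (fun t => W t1 * (t - t1) + R t1)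
        (nhdsWithin b (Set.Iio b)) (nhds (W t1 * (b - t1) + R t1)) := by
      apply Filter.Tendsto.add _ tendsto_const_nhds
      have : Filter.Tendsto (fun t : ℝ => t) (nhdsWithin b (Set.Iio b)) (nhds b) :=
        tendsto_id.mono_left nhdsWithin_le_nhds
      exact (tendsto_const_nhds (x := W t1)
        (f := nhdsWithin b (Set.Iio b))).mul (this.sub tendsto_const_nhds)
    have hfin : W t1 * (b - t1) + R t1 ≤ 0 := by
      apply le_of_tendsto_of_tendsto htends hRb
      filter_upwards [Ioo_mem_nhdsLT_of_mem (Set.right_mem_Ioc.2 ht1.2)] with t ht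
      exact hstep t ht
    have : 0 ≤ R t1 := hRnn t1 ht1
    nlinarith [ht1.2, hneg]
  -- W ≡ 0, so R is constant with limit 0, contradiction
  have hW0 : ∀ t ∈ Set.Ioo (0:ℝ) b, W t = 0 := fun t ht =>
    le_antisymm (hWnp t ht) (hWnn t ht)
  set c : ℝ := b/2 with hc_def
  have hc : c ∈ Set.Ioo (0:ℝ) b := by constructor <;> [positivity; linarith]
  have hconst : ∀ ε ∈ Set.Ioo (0:ℝ) c, R c = R ε := by
    intro ε hε
    have hsub : Set.Icc ε c ⊆ Set.Ioo (0:ℝ) b := fun x hx =>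
      ⟨lt_of_lt_of_le hε.1 hx.1, lt_of_le_of_lt hx.2 hc.2⟩
    have hsub' : Set.Ioo ε c ⊆ Set.Ioo (0:ℝ) b := fun x hx => hsub ⟨hx.1.le, hx.2.le⟩
    have hle := mvt_le (c := 0) hε.2 (fun x hx => hR' x (hsub' hx))
      (fun x hx => (hR' x (hsub hx)).continuousAt.continuousWithinAt)
      (fun x hx => by rw [hW0 x (hsub' hx)]; simp)
    have hge := mvt_ge (c := 0) hε.2 (fun x hx => hR' x (hsub' hx))
      (fun x hx => (hR' x (hsub hx)).continuousAt.continuousWithinAt)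
      (fun x hx => by rw [hW0 x (hsub' hx)]; simp)
    simp only [zero_mul] at hle hge
    linarith
  have hRc : R c = 0 := by
    have h1 : Filter.Tendsto (fun ε : ℝ => R c) (nhdsWithin 0 (Set.Ioi 0))
        (nhds (R c)) := tendsto_const_nhds
    have h2 : Filter.Tendsto (fun ε : ℝ => R c) (nhdsWithin 0 (Set.Ioi 0)) (nhds 0) := by
      apply hR0.congr'
      filter_upwards [Ioo_mem_nhdsGT_of_mem (Set.left_mem_Ico.2 hc.1)] with ε hε
      exact (hconst ε hε).symm
    exact tendsto_nhds_unique h1 h2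
  have hubc : u c = 0 := by
    have hvc : 0 < v c := hvpos c (hIoosub hc)
    have : u c / v c = 0 := hRc
    field_simp at this
    simpa using this
  have : N c = 0 := by
    have := hu2 c
    rw [hubc] at this
    simpa using this.symm
  exact absurd this (hNpos c hc).ne'

lemma no_double_zero (g g1 g2 Q : ℝ → ℂ) (r b : ℝ)
    (hr0 : 0 ≤ r) (hr1 : r < 1) (hb0 : 0 < b) (hb1 : b ≤ 1)
    (hg : ∀ t ∈ Set.Icc (0:ℝ) b, HasDerivAt g (g1 t) t)
    (hg1 : ∀ t ∈ Set.Icc (0:ℝ) b, HasDerivAt g1 (g2 t) t)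
    (hODE : ∀ t ∈ Set.Icc (0:ℝ) b, g2 t = -(Q t) * g t)
    (hQ : ∀ t ∈ Set.Icc (0:ℝ) b, ‖Q t‖ ≤ r^2 / (1 - r^2*t^2)^2)
    (h00 : g 0 = 0) (hbb : g b = 0)
    (hmid : ∀ t ∈ Set.Ioo (0:ℝ) b, g t ≠ 0) : False := by
  apply sturm_real (fun t => Complex.normSq (g t))
    (fun t => 2 * (g1 t * (starRingEnd ℂ) (g t)).re)
    (fun t => 2 * ((g2 t * (starRingEnd ℂ) (g t)).re + Complex.normSq (g1 t)))
    r b hr0 hr1 hb0 hb1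
  · intro t ht
    have h1 : HasDerivAt (fun s => g s * (starRingEnd ℂ) (g s))
        (g1 t * (starRingEnd ℂ) (g t) + g t * (starRingEnd ℂ) (g1 t)) t :=
      (hg t ht).mul (conj_hasDerivAt (hg t ht))
    have h2 := re_hasDerivAt h1
    have e1 : (fun s => (g s * (starRingEnd ℂ) (g s)).re)
        = fun s => Complex.normSq (g s) := by
      funext s; rw [Complex.mul_conj]; simp
    have e2 : (g1 t * (starRingEnd ℂ) (g t) + g t * (starRingEnd ℂ) (g1 t)).re
        = 2 * (g1 t * (starRingEnd ℂ) (g t)).re := by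
      have : g t * (starRingEnd ℂ) (g1 t)
          = (starRingEnd ℂ) (g1 t * (starRingEnd ℂ) (g t)) := by
        rw [map_mul]; simp [mul_comm]
      rw [this, Complex.add_re, Complex.conj_re]; ring
    rw [e1, e2] at h2
    exact h2
  · intro t ht
    have h1 : HasDerivAt (fun s => g1 s * (starRingEnd ℂ) (g s))
        (g2 t * (starRingEnd ℂ) (g t) + g1 t * (starRingEnd ℂ) (g1 t)) t :=
      (hg1 t ht).mul (conj_hasDerivAt (hg t ht))
    have h2 := (re_hasDerivAt h1).const_mul 2
    have e2 : (g2 t * (starRingEnd ℂ) (g t) + g1 t * (starRingEnd ℂ) (g1 t)).re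
        = (g2 t * (starRingEnd ℂ) (g t)).re + Complex.normSq (g1 t) := by
      rw [Complex.add_re, Complex.mul_conj]; simp
    rw [e2] at h2
    exact h2
  · exact fun t => Complex.normSq_nonneg _
  · simp [h00]
  · simp [hbb]
  · exact fun t ht => Complex.normSq_pos.2 (hmid t ht)
  · intro t ht
    have htI : t ∈ Set.Icc (0:ℝ) b := Set.Ioo_subset_Icc_self ht
    set n : ℝ := Complex.normSq (g t) with hn_def
    have hre : (g2 t * (starRingEnd ℂ) (g t)).re = -(Q t).re * n := by
      have h3 : g2 t * (starRingEnd ℂ) (g t) = -(Q t) * ((g t) * (starRingEnd ℂ) (g t)) := by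
        rw [hODE t htI]; ring
      rw [h3, Complex.mul_conj, ← hn_def]
      simp [Complex.mul_re]
    have hre1 : ((g1 t * (starRingEnd ℂ) (g t)).re)^2 ≤ Complex.normSq (g1 t) * n := by
      have h4 : ((g1 t * (starRingEnd ℂ) (g t)).re)^2
          ≤ Complex.normSq (g1 t * (starRingEnd ℂ) (g t)) := by
        rw [Complex.normSq_apply]
        nlinarith [sq_nonneg ((g1 t * (starRingEnd ℂ) (g t)).im)]
      rwa [Complex.normSq_mul, Complex.normSq_conj, ← hn_def] at h4
    have hQre : (Q t).re ≤ r^2 / (1 - r^2*t^2)^2 :=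
      le_trans (Complex.re_le_norm _) (hQ t htI)
    have hnn : 0 ≤ n := Complex.normSq_nonneg _
    have hprod : (Q t).re * n^2 ≤ (r^2 / (1 - r^2*t^2)^2) * n^2 :=
      mul_le_mul_of_nonneg_right hQre (sq_nonneg n)
    nlinarith [hre, hre1, hprod, Complex.normSq_nonneg (g1 t)]

lemma pd_identity (C ca mt : ℂ) (hm : mt ≠ 0) :
    (0 * mt^2 - C * (ca * mt + mt * ca)) / (mt^2)^2 * mt + 2 * (C / mt^2 * ca) = 0 := by
  field_simp
  ring

lemma ode_transport (Aγ fγ F1γ F2γ Pt Pdt mt ca : ℂ)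
    (hF2v : F2γ = -(Aγ * fγ)) (hPm : Pdt * mt + 2 * (Pt * ca) = 0) :
    ((Pdt * F1γ + Pt * (Pt * F2γ)) * mt + Pt * F1γ * ca) + Pt * F1γ * ca
      = -(Aγ * Pt^2) * (fγ * mt) := by
  rw [hF2v]
  linear_combination F1γ * hPm

set_option maxHeartbeats 2000000

/-- Nehari-type criterion along geodesics: between two zeros of a nontrivial solution
there is a point where `(1-|ξ|²)²|A(ξ)| > 1`. -/
theorem exists_large_A_on_geodesic_between_zeros (A f : ℂ → ℂ)
    (hA : DifferentiableOn ℂ A (ball (0 : ℂ) 1))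
    (hf : DifferentiableOn ℂ f (ball (0 : ℂ) 1))
    (hode : ∀ z ∈ ball (0 : ℂ) 1, deriv (deriv f) z + A z * f z = 0)
    (hnt : ∃ z ∈ ball (0 : ℂ) 1, f z ≠ 0)
    (z₁ z₂ : ℂ) (h₁ : z₁ ∈ ball (0 : ℂ) 1) (h₂ : z₂ ∈ ball (0 : ℂ) 1)
    (hz₁ : f z₁ = 0) (hz₂ : f z₂ = 0) (hne : z₁ ≠ z₂) :
    ∃ ξ ∈ geoSeg z₁ z₂, 1 < (1 - ‖ξ‖ ^ 2) ^ 2 * ‖A ξ‖ := by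
  by_contra hcon
  push_neg at hcon
  -- basic data
  have hns1 : Complex.normSq z₁ < 1 := by
    have := mem_ball_zero_iff.1 h₁
    nlinarith [Complex.sq_norm z₁, norm_nonneg z₁]
  have hns2 : Complex.normSq z₂ < 1 := by
    have := mem_ball_zero_iff.1 h₂
    nlinarith [Complex.sq_norm z₂, norm_nonneg z₂]
  have hd0 : (1 : ℂ) - (starRingEnd ℂ) z₁ * z₂ ≠ 0 := by
    have h := mobius_den_ne (z := z₁) (w := -z₂) hns1 (by simpa using hns2.le)
    simpa [sub_eq_add_neg] using h
  set a : ℂ := (z₂ - z₁) / (1 - (starRingEnd ℂ) z₁ * z₂) with ha_def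
  have ha0 : a ≠ 0 := div_ne_zero (sub_ne_zero.2 (Ne.symm hne)) hd0
  set r : ℝ := ‖a‖ with hr_def
  have hr0 : 0 < r := norm_pos_iff.mpr ha0
  have hnsa : Complex.normSq a < 1 := by
    have hid := mobius_normSq (-z₁) z₂
    simp only [map_neg, Complex.normSq_neg] at hid
    have h2 : Complex.normSq a = Complex.normSq (z₂ - z₁) /
        Complex.normSq (1 - (starRingEnd ℂ) z₁ * z₂) := by
      rw [ha_def, Complex.normSq_div]
    have h3 : (0:ℝ) < Complex.normSq (1 - (starRingEnd ℂ) z₁ * z₂) :=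
      Complex.normSq_pos.2 hd0
    rw [h2, div_lt_one h3]
    have he1 : (1 : ℂ) + -(starRingEnd ℂ) z₁ * z₂ = 1 - (starRingEnd ℂ) z₁ * z₂ := by ring
    have he2 : z₂ + -z₁ = z₂ - z₁ := by ring
    rw [he1, he2] at hid
    nlinarith [mul_pos (by linarith : (0:ℝ) < 1 - Complex.normSq z₁)
      (by linarith : (0:ℝ) < 1 - Complex.normSq z₂)]
  have hr1 : r < 1 := by
    nlinarith [Complex.sq_norm a, norm_nonneg a]
  -- the curve, its denominator, and basic geometry
  set m : ℝ → ℂ := fun t => 1 + (starRingEnd ℂ) z₁ * ((t:ℂ) * a) with hm_def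
  set γ : ℝ → ℂ := fun t => ((t:ℂ) * a + z₁) / m t with hγ_def
  have hnsw : ∀ t ∈ Set.Icc (0:ℝ) 1, Complex.normSq ((t:ℂ) * a) < 1 := by
    intro t ht
    rw [Complex.normSq_mul, Complex.normSq_ofReal]
    have h1 : t * t * Complex.normSq a ≤ Complex.normSq a := by
      nlinarith [mul_nonneg (mul_nonneg (sub_nonneg.2 ht.2)
        (by linarith [ht.1] : (0:ℝ) ≤ 1 + t)) (Complex.normSq_nonneg a)]
    linarith [hnsa]
  have hm0 : ∀ t ∈ Set.Icc (0:ℝ) 1, m t ≠ 0 := fun t ht =>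
    mobius_den_ne hns1 (hnsw t ht).le
  have hball_of_ns : ∀ w : ℂ, Complex.normSq w < 1 → w ∈ ball (0:ℂ) 1 := by
    intro w hw
    rw [mem_ball_zero_iff]
    nlinarith [Complex.sq_norm w, norm_nonneg w]
  have hγball : ∀ t ∈ Set.Icc (0:ℝ) 1, γ t ∈ ball (0:ℂ) 1 := fun t ht =>
    hball_of_ns _ (mobius_normSq_lt hns1 (hnsw t ht))
  have hγ0 : γ 0 = z₁ := by
    have hm00 : m 0 = 1 := by simp [hm_def]
    show (((0:ℝ):ℂ) * a + z₁) / m 0 = z₁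
    rw [hm00, div_one]
    push_cast
    ring
  have hγ1 : γ 1 = z₂ := by
    have hm1 := hm0 1 ⟨zero_le_one, le_refl 1⟩
    show (((1:ℝ):ℂ) * a + z₁) / m 1 = z₂
    rw [div_eq_iff hm1]
    show (((1:ℝ):ℂ) * a + z₁) = z₂ * (1 + (starRingEnd ℂ) z₁ * (((1:ℝ):ℂ) * a))
    have had : a * (1 - (starRingEnd ℂ) z₁ * z₂) = z₂ - z₁ := by
      rw [ha_def]; exact div_mul_cancel₀ _ hd0
    push_cast
    linear_combination had
  have hkey_id : ∀ t ∈ Set.Icc (0:ℝ) 1,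
      (1 - Complex.normSq (γ t)) * Complex.normSq (m t)
        = (1 - Complex.normSq z₁) * (1 - r^2*t^2) := by
    intro t ht
    have hid := mobius_normSq z₁ ((t:ℂ) * a)
    have hta : Complex.normSq ((t:ℂ) * a) = r^2*t^2 := by
      rw [Complex.normSq_mul, Complex.normSq_ofReal, hr_def, ← Complex.sq_norm]; ring
    rw [hta] at hid
    have hnsm : Complex.normSq (m t) ≠ 0 := Complex.normSq_pos.2 (hm0 t ht) |>.ne'
    have e : Complex.normSq (γ t) * Complex.normSq (m t)
        = Complex.normSq ((t:ℂ) * a + z₁) := by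
      show Complex.normSq (((t:ℂ) * a + z₁) / m t) * Complex.normSq (m t) = _
      rw [Complex.normSq_div]
      field_simp
    have hmm : Complex.normSq (1 + (starRingEnd ℂ) z₁ * ((t:ℂ) * a))
        = Complex.normSq (m t) := rfl
    rw [hmm] at hid
    linear_combination hid - e
  -- differentiability of f and the ODE
  have hfa : AnalyticOnNhd ℂ f (ball (0:ℂ) 1) := hf.analyticOnNhd isOpen_ball
  have hF1a : AnalyticOnNhd ℂ (deriv f) (ball (0:ℂ) 1) := hfa.deriv
  have hf' : ∀ w ∈ ball (0:ℂ) 1, HasDerivAt f (deriv f w) w := fun w hw =>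
    (hfa w hw).differentiableAt.hasDerivAt
  have hf'' : ∀ w ∈ ball (0:ℂ) 1, HasDerivAt (deriv f) (deriv (deriv f) w) w := fun w hw =>
    (hF1a w hw).differentiableAt.hasDerivAt
  have hF2 : ∀ w ∈ ball (0:ℂ) 1, deriv (deriv f) w = -(A w * f w) := fun w hw => by
    linear_combination hode w hw
  -- curve derivatives
  set P : ℝ → ℂ := fun t => a * (1 - z₁ * (starRingEnd ℂ) z₁) / (m t)^2 with hP_def
  have hofReal : ∀ t : ℝ, HasDerivAt (fun s : ℝ => (s:ℂ)) 1 t := by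
    intro t
    have := (hasDerivAt_id t).ofReal_comp
    rw [Complex.ofReal_one] at this
    exact this
  have hmd : ∀ t : ℝ, HasDerivAt m ((starRingEnd ℂ) z₁ * (1 * a)) t := fun t =>
    (((hofReal t).mul_const a).const_mul ((starRingEnd ℂ) z₁)).const_add 1
  have hγ' : ∀ t ∈ Set.Icc (0:ℝ) 1, HasDerivAt γ (P t) t := by
    intro t ht
    have hnum : HasDerivAt (fun s : ℝ => (s:ℂ) * a + z₁) (1 * a) t :=
      ((hofReal t).mul_const a).add_const z₁
    have hq := hnum.div (hmd t) (hm0 t ht)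
    have e : (1 * a * m t - ((t:ℂ) * a + z₁) * ((starRingEnd ℂ) z₁ * (1 * a))) / (m t)^2
        = P t := by
      rw [hP_def]
      have : 1 * a * m t - ((t:ℂ) * a + z₁) * ((starRingEnd ℂ) z₁ * (1 * a))
          = a * (1 - z₁ * (starRingEnd ℂ) z₁) := by
        simp only [hm_def]; ring
      rw [this]
    rw [e] at hq
    exact hq
  set Pd : ℝ → ℂ := fun t => (0 * (m t)^2 - (a * (1 - z₁ * (starRingEnd ℂ) z₁))
      * ((starRingEnd ℂ) z₁ * (1 * a) * m t + m t * ((starRingEnd ℂ) z₁ * (1 * a))))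
      / ((m t)^2)^2 with hPd_def
  have hP' : ∀ t ∈ Set.Icc (0:ℝ) 1, HasDerivAt P (Pd t) t := by
    intro t ht
    have hpow : HasDerivAt (fun s : ℝ => (m s)^2)
        ((starRingEnd ℂ) z₁ * (1 * a) * m t + m t * ((starRingEnd ℂ) z₁ * (1 * a))) t := by
      have h := (hmd t).mul (hmd t)
      simp only [← pow_two] at h
      exact h
    have h := (hasDerivAt_const t (a * (1 - z₁ * (starRingEnd ℂ) z₁))).div
      hpow (pow_ne_zero 2 (hm0 t ht))
    exact h
  -- the transported solution
  set g : ℝ → ℂ := fun t => f (γ t) * m t with hg_def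
  set g1 : ℝ → ℂ := fun t => P t * deriv f (γ t) * m t
      + f (γ t) * ((starRingEnd ℂ) z₁ * (1 * a)) with hg1_def
  set g2 : ℝ → ℂ := fun t => ((Pd t * deriv f (γ t) + P t * (P t * deriv (deriv f) (γ t))) * m t
      + P t * deriv f (γ t) * ((starRingEnd ℂ) z₁ * (1 * a)))
      + P t * deriv f (γ t) * ((starRingEnd ℂ) z₁ * (1 * a)) with hg2_def
  have hfγ : ∀ t ∈ Set.Icc (0:ℝ) 1,
      HasDerivAt (fun s => f (γ s)) (P t * deriv f (γ t)) t := fun t ht =>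
    comp_hasDerivAt_real (hf' (γ t) (hγball t ht)) (hγ' t ht)
  have hgd : ∀ t ∈ Set.Icc (0:ℝ) 1, HasDerivAt g (g1 t) t := fun t ht =>
    (hfγ t ht).mul (hmd t)
  have hg1d : ∀ t ∈ Set.Icc (0:ℝ) 1, HasDerivAt g1 (g2 t) t := by
    intro t ht
    have hF1γ : HasDerivAt (fun s => deriv f (γ s)) (P t * deriv (deriv f) (γ t)) t :=
      comp_hasDerivAt_real (hf'' (γ t) (hγball t ht)) (hγ' t ht)
    have hterm1 : HasDerivAt (fun s => P s * deriv f (γ s))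
        (Pd t * deriv f (γ t) + P t * (P t * deriv (deriv f) (γ t))) t :=
      (hP' t ht).mul hF1γ
    exact (hterm1.mul (hmd t)).add ((hfγ t ht).mul_const _)
  set Q : ℝ → ℂ := fun t => A (γ t) * (P t)^2 with hQ_def
  have hODEg : ∀ t ∈ Set.Icc (0:ℝ) 1, g2 t = -(Q t) * g t := by
    intro t ht
    have hF2v := hF2 (γ t) (hγball t ht)
    have hPm : Pd t * m t + 2 * (P t * ((starRingEnd ℂ) z₁ * (1 * a))) = 0 :=
      pd_identity _ _ _ (hm0 t ht)
    exact ode_transport (A (γ t)) (f (γ t)) (deriv f (γ t)) (deriv (deriv f) (γ t))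
      (P t) (Pd t) (m t) ((starRingEnd ℂ) z₁ * (1 * a)) hF2v hPm
  have hQb : ∀ t ∈ Set.Icc (0:ℝ) 1, ‖Q t‖ ≤ r^2 / (1 - r^2*t^2)^2 := by
    intro t ht
    have hpos : (0:ℝ) < 1 - r^2*t^2 := by
      have hh1 : r^2 < 1 := by nlinarith [hr0, hr1]
      have hh2 : (0:ℝ) ≤ (1-t)*(1+t)*r^2 := by
        apply mul_nonneg (mul_nonneg _ _) (sq_nonneg r) <;> linarith [ht.1, ht.2]
      nlinarith [hh1, hh2]
    have hσ : (0:ℝ) < 1 - Complex.normSq z₁ := by linarith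
    have hγgeo : γ t ∈ geoSeg z₁ z₂ := ⟨t, ht, rfl⟩
    have hcon' := hcon (γ t) hγgeo
    rw [Complex.sq_norm] at hcon'
    have hkid := hkey_id t ht
    have hnsP : Complex.normSq (P t) * (Complex.normSq (m t))^2
        = r^2 * (1 - Complex.normSq z₁)^2 := by
      have hone : (1:ℂ) - z₁ * (starRingEnd ℂ) z₁
          = ((1 - Complex.normSq z₁ : ℝ) : ℂ) := by
        rw [Complex.mul_conj]; push_cast; ring
      show Complex.normSq (a * (1 - z₁ * (starRingEnd ℂ) z₁) / (m t)^2)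
          * (Complex.normSq (m t))^2 = _
      rw [Complex.normSq_div, Complex.normSq_mul, hone, Complex.normSq_ofReal,
        map_pow]
      have hnsm : Complex.normSq (m t) ≠ 0 := (Complex.normSq_pos.2 (hm0 t ht)).ne'
      rw [hr_def, ← Complex.sq_norm]
      field_simp
    have e1 : ‖Q t‖ = ‖A (γ t)‖ * Complex.normSq (P t) := by
      show ‖A (γ t) * (P t)^2‖ = _
      rw [norm_mul, norm_pow, Complex.sq_norm]
    rw [le_div_iff₀ (by positivity)]
    have c2 : ‖Q t‖ * ((1 - r^2*t^2)^2 * (1 - Complex.normSq z₁)^2)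
        = ((1 - Complex.normSq (γ t))^2 * ‖A (γ t)‖)
          * (r^2 * (1 - Complex.normSq z₁)^2) := by
      rw [e1]
      linear_combination (‖A (γ t)‖ * (1 - Complex.normSq (γ t))^2) * hnsP
        + (‖A (γ t)‖ * Complex.normSq (P t)
            * ((1 - r^2*t^2) * (1 - Complex.normSq z₁)
              + (1 - Complex.normSq (γ t)) * Complex.normSq (m t))) * hkid.symm
    have hthing := mul_le_mul_of_nonneg_right hcon'
      (by positivity : (0:ℝ) ≤ r^2 * (1 - Complex.normSq z₁)^2)
    have hσ2 : (0:ℝ) < (1 - Complex.normSq z₁)^2 := by positivity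
    nlinarith [c2, hthing, hσ2]
  -- endpoint values
  have hg00 : g 0 = 0 := by
    show f (γ 0) * m 0 = 0
    rw [hγ0, hz₁, zero_mul]
  have hgone : g 1 = 0 := by
    show f (γ 1) * m 1 = 0
    rw [hγ1, hz₂, zero_mul]
  -- analytic continuation dichotomy
  set Gc : ℂ → ℂ := fun u => f ((u * a + z₁) / (1 + (starRingEnd ℂ) z₁ * (u * a)))
      * (1 + (starRingEnd ℂ) z₁ * (u * a)) with hGc_def
  have hGg : ∀ t : ℝ, Gc (t:ℂ) = g t := fun t => rfl
  have hGdiff : DifferentiableOn ℂ Gc (ball (0:ℂ) 1) := by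
    have hnsu : ∀ u ∈ ball (0:ℂ) 1, Complex.normSq (u * a) < 1 := by
      intro u hu
      have h1 : Complex.normSq u < 1 := by
        have := mem_ball_zero_iff.1 hu
        nlinarith [Complex.sq_norm u, norm_nonneg u]
      rw [Complex.normSq_mul]
      nlinarith [Complex.normSq_nonneg u, Complex.normSq_nonneg a]
    have hdenne : ∀ u ∈ ball (0:ℂ) 1, 1 + (starRingEnd ℂ) z₁ * (u * a) ≠ 0 := fun u hu =>
      mobius_den_ne hns1 (hnsu u hu).le
    have hmobd : DifferentiableOn ℂ (fun u => (u * a + z₁) / (1 + (starRingEnd ℂ) z₁ * (u * a)))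
        (ball (0:ℂ) 1) := by
      apply DifferentiableOn.div
      · exact ((differentiable_id.mul_const a).add_const z₁).differentiableOn
      · exact (((differentiable_id.mul_const a).const_mul _).const_add 1).differentiableOn
      · exact hdenne
    have hmaps : Set.MapsTo (fun u => (u * a + z₁) / (1 + (starRingEnd ℂ) z₁ * (u * a)))
        (ball (0:ℂ) 1) (ball (0:ℂ) 1) := fun u hu =>
      hball_of_ns _ (mobius_normSq_lt hns1 (hnsu u hu))
    exact (hf.comp hmobd hmaps).mul
      (((differentiable_id.mul_const a).const_mul _).const_add 1).differentiableOn
  have hGanal : AnalyticAt ℂ Gc 0 := hGdiff.analyticOnNhd isOpen_ball 0 (mem_ball_self one_pos)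
  have hone_ne : (1:ℂ) - z₁ * (starRingEnd ℂ) z₁ ≠ 0 := by
    have : (1:ℂ) - z₁ * (starRingEnd ℂ) z₁ = ((1 - Complex.normSq z₁ : ℝ) : ℂ) := by
      rw [Complex.mul_conj]; push_cast; ring
    rw [this]
    exact_mod_cast (by linarith : (1:ℝ) - Complex.normSq z₁ ≠ 0)
  have hγne : ∀ s : ℝ, 0 < s → s ≤ 1 → γ s ≠ z₁ := by
    intro s hs0 hs1 heq
    have hms := hm0 s ⟨hs0.le, hs1⟩
    have h1 : ((s:ℂ) * a + z₁) / m s = z₁ := heq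
    rw [div_eq_iff hms] at h1
    have h1' : (s:ℂ) * a + z₁ = z₁ * (1 + (starRingEnd ℂ) z₁ * ((s:ℂ) * a)) := h1
    have h2 : (s:ℂ) * a * (1 - z₁ * (starRingEnd ℂ) z₁) = 0 := by
      linear_combination h1'
    rcases mul_eq_zero.1 h2 with h3 | h3
    · rcases mul_eq_zero.1 h3 with h4 | h4
      · exact hs0.ne' (by exact_mod_cast h4)
      · exact ha0 h4
    · exact hone_ne h3
  have hgval : ∀ t : ℝ, g t = f (γ t) * m t := fun t => rfl
  clear_value a r m γ P Pd g g1 g2 Q Gc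
  rcases hGanal.eventually_eq_zero_or_eventually_ne_zero with hc1 | hc2
  · -- f vanishes identically: contradiction with hnt
    obtain ⟨δ, hδ0, hall⟩ := Metric.eventually_nhds_iff.1 hc1
    set s : ℕ → ℝ := fun n => min (δ/2) 1 / (n+1) with hs_def
    have hsmin0 : 0 < min (δ/2) 1 := lt_min (by linarith) one_pos
    have hs0 : ∀ n, 0 < s n := fun n => by positivity
    have hsle : ∀ n : ℕ, s n ≤ min (δ/2) 1 := by
      intro n
      have h1 : (1:ℝ) ≤ (n:ℝ)+1 := by
        have : (0:ℝ) ≤ (n:ℝ) := Nat.cast_nonneg n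
        linarith
      exact div_le_self hsmin0.le h1
    have hs1 : ∀ n, s n ≤ 1 := fun n => le_trans (hsle n) (min_le_right _ _)
    have hsδ : ∀ n, s n < δ := by
      intro n
      have h2 : min (δ/2) 1 ≤ δ/2 := min_le_left _ _
      have := hsle n
      linarith
    have hfz : ∀ n, f (γ (s n)) = 0 := by
      intro n
      have hg0 : Gc ((s n : ℝ) : ℂ) = 0 := by
        apply hall
        rw [Complex.dist_eq, sub_zero, Complex.norm_real, Real.norm_eq_abs, abs_of_pos (hs0 n)]
        exact hsδ n
      rw [hGg, hgval] at hg0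
      rcases mul_eq_zero.1 hg0 with h | h
      · exact h
      · exact absurd h (hm0 (s n) ⟨(hs0 n).le, hs1 n⟩)
    have hγcont : ContinuousAt γ 0 := (hγ' 0 ⟨le_refl 0, zero_le_one⟩).continuousAt
    have hstend : Filter.Tendsto s atTop (nhds 0) := by
      have h0 := tendsto_one_div_add_atTop_nhds_zero_nat (𝕜 := ℝ)
      have h1 := h0.const_mul (min (δ/2) 1)
      rw [mul_zero] at h1
      apply h1.congr
      intro n
      rw [hs_def, mul_one_div]
    have htend : Filter.Tendsto (fun n => γ (s n)) atTop
        (nhdsWithin z₁ {z₁}ᶜ) := by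
      apply tendsto_nhdsWithin_of_tendsto_nhds_of_eventually_within
      · have := hγcont.tendsto.comp hstend
        rwa [hγ0] at this
      · exact Filter.Eventually.of_forall fun n => hγne (s n) (hs0 n) (hs1 n)
    have hfreq : ∃ᶠ w in nhdsWithin z₁ {z₁}ᶜ, f w = 0 :=
      htend.frequently (Filter.Frequently.of_forall hfz)
    have hzero := hfa.eqOn_zero_of_preconnected_of_frequently_eq_zero
      (convex_ball (0:ℂ) 1).isPreconnected h₁ hfreq
    obtain ⟨w, hw, hfw⟩ := hnt
    exact hfw (hzero hw)
  · -- isolated zero at 0: produce the first positive zero and apply Sturm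
    have hc2' := eventually_nhdsWithin_iff.1 hc2
    obtain ⟨δ, hδ0, hall⟩ := Metric.eventually_nhds_iff.1 hc2'
    set δm : ℝ := min (δ/2) 1 with hδm_def
    have hδm0 : 0 < δm := lt_min (by linarith) one_pos
    have hδm1 : δm ≤ 1 := min_le_right _ _
    have hno : ∀ t : ℝ, 0 < t → t < δm → g t ≠ 0 := by
      intro t ht0 htδ hgt
      have h1 : Gc ((t:ℝ):ℂ) ≠ 0 := by
        apply hall
        · rw [Complex.dist_eq, sub_zero, Complex.norm_real, Real.norm_eq_abs, abs_of_pos ht0]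
          have : δm ≤ δ/2 := min_le_left _ _
          linarith
        · simp only [Set.mem_compl_iff, Set.mem_singleton_iff]
          exact_mod_cast ht0.ne'
      rw [hGg] at h1
      exact h1 hgt
    have hgcont : ContinuousOn g (Set.Icc δm 1) := fun t ht =>
      (hgd t ⟨le_trans hδm0.le ht.1, ht.2⟩).continuousAt.continuousWithinAt
    have hSclosed : IsClosed (Set.Icc δm 1 ∩ g ⁻¹' {0}) :=
      hgcont.preimage_isClosed_of_isClosed isClosed_Icc isClosed_singleton
    have hS1 : (1:ℝ) ∈ Set.Icc δm 1 ∩ g ⁻¹' {0} := by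
      constructor
      · exact ⟨hδm1, le_refl 1⟩
      · simp [hgone]
    have hSne : (Set.Icc δm 1 ∩ g ⁻¹' {0}).Nonempty := ⟨1, hS1⟩
    have hSbdd : BddBelow (Set.Icc δm 1 ∩ g ⁻¹' {0}) :=
      ⟨δm, fun x hx => hx.1.1⟩
    set t₂ : ℝ := sInf (Set.Icc δm 1 ∩ g ⁻¹' {0}) with ht₂_def
    have ht₂mem := hSclosed.csInf_mem hSne hSbdd
    have ht₂δ : δm ≤ t₂ := ht₂mem.1.1
    have ht₂1 : t₂ ≤ 1 := ht₂mem.1.2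
    have hgt₂ : g t₂ = 0 := ht₂mem.2
    have ht₂0 : 0 < t₂ := lt_of_lt_of_le hδm0 ht₂δ
    have hmidd : ∀ t ∈ Set.Ioo (0:ℝ) t₂, g t ≠ 0 := by
      intro t ht hgt
      rcases lt_or_ge t δm with h | h
      · exact hno t ht.1 h hgt
      · have htS : t ∈ Set.Icc δm 1 ∩ g ⁻¹' {0} :=
          ⟨⟨h, le_trans ht.2.le ht₂1⟩, by simp [hgt]⟩
        have := csInf_le hSbdd htS
        rw [← ht₂_def] at this
        exact absurd ht.2 (not_lt.2 this)
    have hsub : Set.Icc (0:ℝ) t₂ ⊆ Set.Icc (0:ℝ) 1 := Set.Icc_subset_Icc_right ht₂1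
    exact no_double_zero g g1 g2 Q r t₂ hr0.le hr1 ht₂0 ht₂1
      (fun t ht => hgd t (hsub ht)) (fun t ht => hg1d t (hsub ht))
      (fun t ht => hODEg t (hsub ht)) (fun t ht => hQb t (hsub ht))
      hg00 hgt₂ hmidd
end
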